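/- Let 0 ≤ p ≤ m and 0 ≤ q < n, and let β be an entry of B. Then the evaluation of Sylv^{p,q}(A,B) at β equals (−1)^{q+(m−p)} · coeff_{p+q}( Sylv^{p,q}(A, B−β) ) · R(β,A), where B−β is the list B with the entry β removed and coeff_{p+q} denotes the coefficient of x^{p+q}. -/
import Mathlib


open Polynomial Finset

noncomputable section

variable {F : Type*} [Field F]

/-- Coefficient of a polynomial at an integer index (0 for negative indices). -/
def coeffZ (f : F[X]) (z : ℤ) : F := if 0 ≤ z then f.coeff z.toNat else 0

/-- The `(m+n-2k) × (m+n-2k)` matrix `M_k(f,g)` whose determinant is the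
`k`-th subresultant of `f` (of degree `m`) and `g` (of degree `n`). -/
def sresM (m n k : ℕ) (f g : F[X]) :
    Matrix (Fin (m + n - 2*k)) (Fin (m + n - 2*k)) F[X] := fun i j =>
  if (j : ℕ) = m + n - 2*k - 1 then
    if (i : ℕ) < n - k then X ^ (n - k - 1 - (i : ℕ)) * f
    else X ^ (m - k - 1 - ((i : ℕ) - (n - k))) * g
  else
    if (i : ℕ) < n - k then C (coeffZ f ((m : ℤ) + (i : ℕ) - (j : ℕ)))
    else C (coeffZ g ((k : ℤ) + (i : ℕ) - (j : ℕ)))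

/-- `M_k(f,g)` with the last column replaced by `(x^{n-k-1},…,x^0,0,…,0)ᵀ`. -/
def sresMF (m n k : ℕ) (f g : F[X]) :
    Matrix (Fin (m + n - 2*k)) (Fin (m + n - 2*k)) F[X] := fun i j =>
  if (j : ℕ) = m + n - 2*k - 1 then
    if (i : ℕ) < n - k then X ^ (n - k - 1 - (i : ℕ)) else 0
  else sresM m n k f g i j

/-- `M_k(f,g)` with the last column replaced by `(0,…,0,x^{m-k-1},…,x^0)ᵀ`. -/
def sresMG (m n k : ℕ) (f g : F[X]) :
    Matrix (Fin (m + n - 2*k)) (Fin (m + n - 2*k)) F[X] := fun i j =>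
  if (j : ℕ) = m + n - 2*k - 1 then
    if (i : ℕ) < n - k then 0 else X ^ (m - k - 1 - ((i : ℕ) - (n - k)))
  else sresM m n k f g i j

/-- The `k`-th subresultant `Sres_k(f,g)` w.r.t. degrees `m`, `n`. -/
def Sres (m n k : ℕ) (f g : F[X]) : F[X] := (sresM m n k f g).det

/-- The polynomial `F_k(f,g)` w.r.t. degrees `m`, `n`. -/
def Fk (m n k : ℕ) (f g : F[X]) : F[X] := (sresMF m n k f g).det

/-- The polynomial `G_k(f,g)` w.r.t. degrees `m`, `n`. -/
def Gk (m n k : ℕ) (f g : F[X]) : F[X] := (sresMG m n k f g).det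

/-- `R(Y,Z) = ∏_{y ∈ Y, z ∈ Z} (y - z)`. -/
def Rp {ι κ : Type*} (a : ι → F) (b : κ → F) (S : Finset ι) (T : Finset κ) : F :=
  ∏ i ∈ S, ∏ j ∈ T, (a i - b j)

/-- `R(x,Y) = ∏_{y ∈ Y} (x - y)` as a polynomial. -/
def RX {ι : Type*} (a : ι → F) (S : Finset ι) : F[X] :=
  ∏ i ∈ S, (X - C (a i))

/-- Sylvester's double sum `Sylv^{p,q}(A,B)`. -/
def sylv {m n : ℕ} (A : Fin m → F) (B : Fin n → F) (p q : ℕ) : F[X] :=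
  ∑ S ∈ (univ : Finset (Fin m)).powersetCard p,
    ∑ T ∈ (univ : Finset (Fin n)).powersetCard q,
      C ((Rp A B S T * Rp A B Sᶜ Tᶜ) / (Rp A A S Sᶜ * Rp B B T Tᶜ)) *
        (RX A S * RX B T)

end
section AuxLemmas

variable {F : Type*} [Field F]

lemma RX_monic {ι : Type*} (a : ι → F) (S : Finset ι) : (RX a S).Monic :=
  monic_prod_of_monic _ _ fun i _ => monic_X_sub_C (a i)

lemma RX_natDegree {ι : Type*} (a : ι → F) (S : Finset ι) :
    (RX a S).natDegree = S.card := by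
  unfold RX
  rw [natDegree_prod]
  · simp
  · intro i _; exact (monic_X_sub_C (a i)).ne_zero

lemma RX_eval {ι : Type*} (a : ι → F) (S : Finset ι) (x : F) :
    (RX a S).eval x = ∏ i ∈ S, (x - a i) := by
  simp [RX, eval_prod]

lemma map_compl_succAbove {n : ℕ} (j0 : Fin (n + 1)) (T : Finset (Fin n)) :
    (T.map j0.succAboveEmb)ᶜ = insert j0 (Tᶜ.map j0.succAboveEmb) := by
  ext j
  rcases eq_or_ne j j0 with rfl | hj
  · simp only [Finset.mem_compl, Finset.mem_map, Finset.mem_insert]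
    simp [Fin.succAbove_ne]
  · obtain ⟨j', rfl⟩ := Fin.exists_succAbove_eq hj
    simp [Finset.mem_compl, Finset.mem_map,
      Fin.succAbove_right_injective.eq_iff, (Fin.succAbove_ne j0 j'),
      (Fin.succAbove_ne j0 j')]

lemma prod_neg_sign {ι : Type*} (a : ι → F) (x : F) (S : Finset ι) :
    ∏ i ∈ S, (a i - x) = (-1 : F) ^ S.card * ∏ i ∈ S, (x - a i) := by
  rw [← Finset.prod_const, ← Finset.prod_mul_distrib]
  exact Finset.prod_congr rfl fun i _ => by ring

end AuxLemmas

/-- for `0 ≤ p ≤ m` and `0 ≤ q < |B|`, and `β` an entry of `B`,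
`Sylv^{p,q}(A,B)(β) = (−1)^{q+(m−p)} · coeff_{p+q}(Sylv^{p,q}(A,B−β)) · R(β,A)`.
Here `B` has length `n+1` and `B − β` is `B` with the entry `β = B j0` removed. -/
theorem sylvester_double_sum_eval_root_g {F : Type*} [Field F] {m n : ℕ} (hm : 1 ≤ m)
    (A : Fin m → F) (B : Fin (n + 1) → F)
    (hA : Function.Injective A) (hB : Function.Injective B)
    (p q : ℕ) (hp : p ≤ m) (hq : q < n + 1) (j0 : Fin (n + 1)) :
    (sylv A B p q).eval (B j0)
      = (-1 : F) ^ (q + (m - p))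
          * ((sylv A (fun j : Fin n => B (j0.succAbove j)) p q).coeff (p + q))
          * ∏ i, (B j0 - A i) := by
  classical
  set β := B j0 with hβ
  set B' : Fin n → F := fun j => B (j0.succAbove j) with hB'
  have hB'inj : Function.Injective B' := fun a b h =>
    Fin.succAbove_right_injective (hB h)
  -- the coefficient on the RHS
  have hcoeff : (sylv A B' p q).coeff (p + q)
      = ∑ S ∈ (univ : Finset (Fin m)).powersetCard p,
          ∑ T ∈ (univ : Finset (Fin n)).powersetCard q,
            (Rp A B' S T * Rp A B' Sᶜ Tᶜ) / (Rp A A S Sᶜ * Rp B' B' T Tᶜ) := by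
    unfold sylv
    rw [finset_sum_coeff]
    refine Finset.sum_congr rfl fun S hS => ?_
    rw [finset_sum_coeff]
    refine Finset.sum_congr rfl fun T hT => ?_
    have hS' : S.card = p := Finset.mem_powersetCard_univ.mp hS
    have hT' : T.card = q := Finset.mem_powersetCard_univ.mp hT
    have hmon : (RX A S * RX B' T).Monic := (RX_monic A S).mul (RX_monic B' T)
    have hdeg : (RX A S * RX B' T).natDegree = p + q := by
      rw [(RX_monic A S).natDegree_mul (RX_monic B' T), RX_natDegree, RX_natDegree, hS', hT']
    rw [coeff_C_mul, ← hdeg, hmon.coeff_natDegree, mul_one]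
  rw [hcoeff]
  -- push the constants into the double sum on the RHS
  rw [Finset.mul_sum, Finset.sum_mul]
  -- evaluate the LHS
  unfold sylv
  rw [eval_finset_sum]
  refine Finset.sum_congr rfl fun S hS => ?_
  rw [Finset.mul_sum, Finset.sum_mul, eval_finset_sum]
  have hS' : S.card = p := Finset.mem_powersetCard_univ.mp hS
  -- restrict the sum to subsets avoiding j0
  have hvanish : ∀ T ∈ (univ : Finset (Fin (n + 1))).powersetCard q,
      T ∉ ((univ : Finset (Fin n)).map j0.succAboveEmb).powersetCard q →
      eval β (C ((Rp A B S T * Rp A B Sᶜ Tᶜ) / (Rp A A S Sᶜ * Rp B B T Tᶜ)) *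
        (RX A S * RX B T)) = 0 := by
    intro T hT hT'
    have hj0 : j0 ∈ T := by
      by_contra hj0
      refine hT' (Finset.mem_powersetCard.mpr ⟨?_, (Finset.mem_powersetCard_univ.mp hT)⟩)
      intro j hj
      rcases eq_or_ne j j0 with rfl | hne
      · exact absurd hj hj0
      · obtain ⟨j', rfl⟩ := Fin.exists_succAbove_eq hne
        exact Finset.mem_map_of_mem _ (Finset.mem_univ j')
    rw [eval_mul, eval_mul, RX_eval B T β]
    have : ∏ j ∈ T, (β - B j) = 0 := Finset.prod_eq_zero hj0 (by simp [hβ])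
    rw [this, mul_zero, mul_zero]
  rw [← Finset.sum_subset (Finset.powersetCard_mono (Finset.subset_univ _)) hvanish,
    Finset.powersetCard_map, Finset.sum_map]
  refine Finset.sum_congr rfl fun T hT => ?_
  have hME : (Finset.mapEmbedding j0.succAboveEmb).toEmbedding T = T.map j0.succAboveEmb := rfl
  rw [hME]
  have hT' : T.card = q := Finset.mem_powersetCard_univ.mp hT
  -- per-term computation
  have hj0nm : ∀ (U : Finset (Fin n)), j0 ∉ U.map j0.succAboveEmb := by
    intro U h
    obtain ⟨j', _, hj'⟩ := Finset.mem_map.mp h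
    exact Fin.succAbove_ne j0 j' hj'
  have hTc := map_compl_succAbove j0 T
  have h1 : Rp A B S (T.map j0.succAboveEmb) = Rp A B' S T := by
    unfold Rp
    exact Finset.prod_congr rfl fun i _ => by rw [Finset.prod_map]; rfl
  have h2 : Rp A B Sᶜ (T.map j0.succAboveEmb)ᶜ
      = (∏ i ∈ Sᶜ, (A i - β)) * Rp A B' Sᶜ Tᶜ := by
    unfold Rp
    rw [← Finset.prod_mul_distrib]
    refine Finset.prod_congr rfl fun i _ => ?_
    rw [hTc, Finset.prod_insert (hj0nm Tᶜ), Finset.prod_map]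
    rfl
  have h3 : Rp B B (T.map j0.succAboveEmb) (T.map j0.succAboveEmb)ᶜ
      = (∏ j ∈ T, (B' j - β)) * Rp B' B' T Tᶜ := by
    unfold Rp
    rw [Finset.prod_map, ← Finset.prod_mul_distrib]
    refine Finset.prod_congr rfl fun j _ => ?_
    rw [hTc, Finset.prod_insert (hj0nm Tᶜ), Finset.prod_map]
    rfl
  have h4 : eval β (RX B (T.map j0.succAboveEmb)) = ∏ j ∈ T, (β - B' j) := by
    rw [RX_eval, Finset.prod_map]
    rfl
  rw [eval_mul, eval_C, eval_mul, RX_eval A S β, h4, h1, h2, h3]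
  -- sign bookkeeping
  have hcardSc : Sᶜ.card = m - p := by
    rw [Finset.card_compl, hS']; simp
  have hu : ∏ i ∈ Sᶜ, (A i - β) = (-1 : F) ^ (m - p) * ∏ i ∈ Sᶜ, (β - A i) := by
    rw [prod_neg_sign, hcardSc]
  have hv : ∏ j ∈ T, (B' j - β) = (-1 : F) ^ q * ∏ j ∈ T, (β - B' j) := by
    rw [prod_neg_sign, hT']
  have hall : ∏ i, (β - A i) = (∏ i ∈ S, (β - A i)) * ∏ i ∈ Sᶜ, (β - A i) :=
    (Finset.prod_mul_prod_compl S _).symm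
  have hw : (∏ j ∈ T, (β - B' j)) ≠ 0 := by
    refine Finset.prod_ne_zero_iff.mpr fun j _ => sub_ne_zero.mpr fun h => ?_
    exact Fin.ne_succAbove j0 j (hB h)
  have hD1 : Rp A A S Sᶜ ≠ 0 := by
    refine Finset.prod_ne_zero_iff.mpr fun i hi => Finset.prod_ne_zero_iff.mpr fun j hj => ?_
    exact sub_ne_zero.mpr fun h => (Finset.mem_compl.mp hj) (hA h ▸ hi)
  have hD2 : Rp B' B' T Tᶜ ≠ 0 := by
    refine Finset.prod_ne_zero_iff.mpr fun i hi => Finset.prod_ne_zero_iff.mpr fun j hj => ?_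
    exact sub_ne_zero.mpr fun h => (Finset.mem_compl.mp hj) (hB'inj h ▸ hi)
  rw [hu, hv, hall, pow_add]
  set N1 := Rp A B' S T
  set N2 := Rp A B' Sᶜ Tᶜ
  set D1 := Rp A A S Sᶜ
  set D2 := Rp B' B' T Tᶜ
  set e := ∏ i ∈ S, (β - A i)
  set u := ∏ i ∈ Sᶜ, (β - A i)
  set w := ∏ j ∈ T, (β - B' j)
  rcases Nat.even_or_odd q with hq2 | hq2 <;>
    rcases Nat.even_or_odd (m - p) with hmp2 | hmp2 <;>
      simp only [hq2.neg_one_pow, hmp2.neg_one_pow, one_mul, neg_one_mul, neg_mul, mul_neg,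
        neg_neg, neg_div, div_neg] <;>
      field_simp <;> ring
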